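/- Let Θ be a proper convex function, {x_n} ⊂ D(∂Θ) with ξ_n ∈ ∂Θ(x_n), and x̂ ∈ D(Θ). Suppose the sequence D_{ξ_n}Θ(x̂, x_n) is nonincreasing and there is a constant c₀ > 0 such that |⟨ξ_m − ξ_l, x_m − x̂⟩| ≤ c₀(D_{ξ_l}Θ(x̂, x_l) − D_{ξ_m}Θ(x̂, x_m)) for all l < m. Then D_{ξ_l}Θ(x_m, x_l) ≤ (1 + c₀)(D_{ξ_l}Θ(x̂, x_l) − D_{ξ_m}Θ(x̂, x_m)) for all l < m; in particular D_{ξ_l}Θ(x_m, x_l) → 0 as l, m → ∞. -/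

import Mathlib

/-- Cauchy-type Bregman-distance estimate for the iterates. -/
theorem bregman_cauchy_estimate {X : Type*} [NormedAddCommGroup X] [NormedSpace ℝ X]
    (Θ : X → ℝ) (x : ℕ → X) (ξ : ℕ → StrongDual ℝ X)
    (hsub : ∀ n, ∀ z, Θ (x n) + ξ n (z - x n) ≤ Θ z)
    (xhat : X) (c₀ : ℝ) (hc₀ : 0 < c₀)
    (D : ℕ → ℝ) (hD : ∀ n, D n = Θ xhat - Θ (x n) - ξ n (xhat - x n))
    (hmono : ∀ n, D (n + 1) ≤ D n)
    (hkey : ∀ l m, l < m → |ξ m (x m - xhat) - ξ l (x m - xhat)| ≤ c₀ * (D l - D m)) :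
    (∀ l m, l < m →
      Θ (x m) - Θ (x l) - ξ l (x m - x l) ≤ (1 + c₀) * (D l - D m)) ∧
    (∀ ε > 0, ∃ N, ∀ l m, N ≤ l → l < m →
      Θ (x m) - Θ (x l) - ξ l (x m - x l) < ε) := by
  have hD0 : ∀ n, 0 ≤ D n := fun n => by
    have := hsub n xhat; rw [hD n]; linarith
  have hant : Antitone D := antitone_nat_of_succ_le hmono
  have key : ∀ l m, l < m →
      Θ (x m) - Θ (x l) - ξ l (x m - x l) ≤ (1 + c₀) * (D l - D m) := by
    intro l m hlm
    have h2 : ξ m (x m - xhat) - ξ l (x m - xhat) ≤ c₀ * (D l - D m) :=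
      (abs_le.mp (hkey l m hlm)).2
    have hid : Θ (x m) - Θ (x l) - ξ l (x m - x l)
        = (D l - D m) + (ξ m (x m - xhat) - ξ l (x m - xhat)) := by
      rw [hD l, hD m]
      simp only [map_sub]
      ring
    linarith
  refine ⟨key, ?_⟩
  intro ε hε
  have hbd : BddBelow (Set.range D) := ⟨0, by rintro _ ⟨n, rfl⟩; exact hD0 n⟩
  set L := ⨅ n, D n with hL
  have hLle : ∀ n, L ≤ D n := fun n => ciInf_le hbd n
  have hpos : 0 < 1 + c₀ := by linarith
  have hεpos : 0 < ε / (1 + c₀) := by positivity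
  obtain ⟨N, hN⟩ : ∃ N, D N < L + ε / (1 + c₀) := by
    have h : (⨅ n, D n) < L + ε / (1 + c₀) := by
      rw [← hL]; linarith
    exact exists_lt_of_ciInf_lt h
  refine ⟨N, fun l m hNl hlm => ?_⟩
  have h1 := key l m hlm
  have hDl : D l ≤ D N := hant hNl
  have hDm : L ≤ D m := hLle m
  have h2 : D l - D m < ε / (1 + c₀) := by linarith
  calc Θ (x m) - Θ (x l) - ξ l (x m - x l) ≤ (1 + c₀) * (D l - D m) := h1
    _ < (1 + c₀) * (ε / (1 + c₀)) := by exact mul_lt_mul_of_pos_left h2 hpos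
    _ = ε := by field_simp
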